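/- Let ρ ≥ 0 with ρ < 1 and let u ∈ (0, 1/2]. Then C(u,u;ρ) ≥ u·g(u;ρ), i.e. Φ₂(Φ⁻¹(u),Φ⁻¹(u);ρ) ≥ u·Φ(√((1−ρ)/(1+ρ))·Φ⁻¹(u)). -/

import Mathlib

open MeasureTheory Real Set

/-- Standard normal density φ. -/
noncomputable def stdPdf (x : ℝ) : ℝ :=
  (1 / Real.sqrt (2 * Real.pi)) * Real.exp (-x ^ 2 / 2)

/-- Standard normal distribution function Φ. -/
noncomputable def stdCdf (h : ℝ) : ℝ := ∫ x in Set.Iio h, stdPdf x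

/-- Inverse Φ⁻¹ of the standard normal distribution function (on (0,1)). -/
noncomputable def stdQuantile : ℝ → ℝ := Function.invFun stdCdf

/-- Bivariate standard normal density φ₂ with correlation ρ. -/
noncomputable def binPdf (x y ρ : ℝ) : ℝ :=
  (1 / (2 * Real.pi * Real.sqrt (1 - ρ ^ 2))) *
    Real.exp (-(x ^ 2 - 2 * ρ * x * y + y ^ 2) / (2 * (1 - ρ ^ 2)))

/-- Bivariate standard normal distribution function Φ₂. -/
noncomputable def binCdf (h k ρ : ℝ) : ℝ :=
  ∫ x in Set.Iio h, ∫ y in Set.Iio k, binPdf x y ρ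

/-- The bivariate normal copula C(u,v;ρ) = Φ₂(Φ⁻¹(u),Φ⁻¹(v);ρ). -/
noncomputable def normCopula (u v ρ : ℝ) : ℝ :=
  binCdf (stdQuantile u) (stdQuantile v) ρ

/-- g(u;ρ) = Φ(√((1−ρ)/(1+ρ))·Φ⁻¹(u)). -/
noncomputable def gFun (u ρ : ℝ) : ℝ :=
  stdCdf (Real.sqrt ((1 - ρ) / (1 + ρ)) * stdQuantile u)

section Aux

open Filter

lemma stdPdf_eq (x : ℝ) : stdPdf x = (1 / Real.sqrt (2 * Real.pi)) * Real.exp (-(1/2) * x ^ 2) := by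
  rw [stdPdf]; ring_nf

lemma stdPdf_pos (x : ℝ) : 0 < stdPdf x := by
  apply mul_pos _ (Real.exp_pos _)
  positivity

lemma stdPdf_nonneg (x : ℝ) : 0 ≤ stdPdf x := (stdPdf_pos x).le

lemma continuous_stdPdf : Continuous stdPdf := by
  unfold stdPdf; fun_prop

lemma integrable_stdPdf : Integrable stdPdf := by
  have : stdPdf = fun x => (1 / Real.sqrt (2 * Real.pi)) * Real.exp (-(1/2) * x ^ 2) := by
    funext x; exact stdPdf_eq x
  rw [this]
  exact (integrable_exp_neg_mul_sq (by norm_num)).const_mul _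

lemma integral_stdPdf : ∫ x, stdPdf x = 1 := by
  have h1 : ∫ x, stdPdf x = (1 / Real.sqrt (2 * Real.pi)) * ∫ x : ℝ, Real.exp (-(1/2) * x ^ 2) := by
    rw [← MeasureTheory.integral_const_mul]
    congr 1; funext x; exact stdPdf_eq x
  rw [h1, integral_gaussian]
  have h2 : (Real.pi / (1/2)) = 2 * Real.pi := by ring
  rw [h2, one_div, inv_mul_cancel₀]
  positivity

lemma stdCdf_eq_Iic (h : ℝ) : stdCdf h = ∫ x in Set.Iic h, stdPdf x := by
  rw [stdCdf, MeasureTheory.Measure.restrict_congr_set Iio_ae_eq_Iic]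

lemma stdCdf_nonneg (h : ℝ) : 0 ≤ stdCdf h :=
  MeasureTheory.setIntegral_nonneg measurableSet_Iio (fun x _ => stdPdf_nonneg x)

lemma stdCdf_le_one (h : ℝ) : stdCdf h ≤ 1 := by
  rw [← integral_stdPdf]
  exact setIntegral_le_integral integrable_stdPdf (Eventually.of_forall stdPdf_nonneg)

lemma stdCdf_mono : Monotone stdCdf := by
  intro a b hab
  exact setIntegral_mono_set integrable_stdPdf.integrableOn
    (Eventually.of_forall stdPdf_nonneg) (HasSubset.Subset.eventuallyLE (Iio_subset_Iio hab))

lemma continuous_stdCdf : Continuous stdCdf := by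
  have key : ∀ b : ℝ, stdCdf b = stdCdf 0 + ∫ x in (0:ℝ)..b, stdPdf x := by
    intro b
    have := intervalIntegral.integral_Iic_sub_Iic (μ := volume) (f := stdPdf) (a := (0:ℝ)) (b := b)
      integrable_stdPdf.integrableOn integrable_stdPdf.integrableOn
    rw [stdCdf_eq_Iic, stdCdf_eq_Iic]
    linarith
  have : Continuous fun b => stdCdf 0 + ∫ x in (0:ℝ)..b, stdPdf x :=
    continuous_const.add (integrable_stdPdf.continuous_primitive 0)
  exact (funext key : stdCdf = _) ▸ this

lemma tendsto_stdCdf_atTop : Tendsto stdCdf atTop (nhds 1) := by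
  have h := MeasureTheory.tendsto_setIntegral_of_monotone (μ := volume) (f := stdPdf)
    (s := fun t : ℝ => Iio t) (fun t => measurableSet_Iio)
    (fun a b hab => Iio_subset_Iio hab)
    (by rw [Set.iUnion_Iio]; exact integrable_stdPdf.integrableOn)
  rwa [Set.iUnion_Iio, MeasureTheory.Measure.restrict_univ, integral_stdPdf] at h

lemma tendsto_stdCdf_atBot : Tendsto stdCdf atBot (nhds 0) := by
  have h := MeasureTheory.intervalIntegral_tendsto_integral_Iic (μ := volume) (f := stdPdf)
    (a := fun t : ℝ => t) (l := atBot) 0 integrable_stdPdf.integrableOn tendsto_id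
  have key : ∀ t : ℝ, stdCdf t = stdCdf 0 - ∫ x in t..(0:ℝ), stdPdf x := by
    intro t
    have := intervalIntegral.integral_Iic_sub_Iic (μ := volume) (f := stdPdf) (a := t) (b := (0:ℝ))
      integrable_stdPdf.integrableOn integrable_stdPdf.integrableOn
    rw [stdCdf_eq_Iic, stdCdf_eq_Iic]
    linarith
  have h2 : Tendsto (fun t : ℝ => stdCdf 0 - ∫ x in t..(0:ℝ), stdPdf x) atBot
      (nhds (stdCdf 0 - ∫ x in Iic (0:ℝ), stdPdf x)) := (tendsto_const_nhds.sub h)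
  rw [← stdCdf_eq_Iic, sub_self] at h2
  exact h2.congr (fun t => (key t).symm)

lemma stdCdf_surj {u : ℝ} (h0 : 0 < u) (h1 : u < 1) : ∃ t, stdCdf t = u := by
  obtain ⟨a, ha⟩ : ∃ a, stdCdf a ≤ u := (tendsto_stdCdf_atBot.eventually_le_const h0).exists
  obtain ⟨b, hb⟩ : ∃ b, u ≤ stdCdf b := (tendsto_stdCdf_atTop.eventually_const_le h1).exists
  exact intermediate_value_univ a b continuous_stdCdf (mem_Icc.mpr ⟨ha, hb⟩)

lemma stdCdf_stdQuantile {u : ℝ} (h0 : 0 < u) (h1 : u < 1) : stdCdf (stdQuantile u) = u :=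
  Function.invFun_eq (stdCdf_surj h0 h1)

lemma image_affine_Iio (s m c : ℝ) (hs : 0 < s) :
    (fun z => s * z + m) '' Iio c = Iio (s * c + m) := by
  ext y
  simp only [mem_image, mem_Iio]
  constructor
  · rintro ⟨z, hz, rfl⟩
    have := (mul_lt_mul_iff_right₀ hs).mpr hz
    linarith
  · intro hy
    refine ⟨(y - m) / s, ?_, by field_simp; ring⟩
    rw [div_lt_iff₀ hs]
    linarith [mul_comm c s]

lemma sub_lemma (s m h : ℝ) (hs : 0 < s) :
    ∫ y in Iio h, stdPdf ((y - m) / s) = s * stdCdf ((h - m) / s) := by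
  have key := integral_image_eq_integral_abs_deriv_smul (f := fun z => s * z + m)
    (f' := fun _ => s) (s := Iio ((h - m) / s)) measurableSet_Iio
    (fun x _ => by simpa using (((hasDerivAt_id x).const_mul s).add_const m).hasDerivWithinAt)
    (fun x _ y _ hxy => by
      have hxy' : s * x + m = s * y + m := hxy
      have : s * x = s * y := by linarith
      exact mul_left_cancel₀ hs.ne' this)
    (fun y => stdPdf ((y - m) / s))
  rw [image_affine_Iio _ _ _ hs] at key
  have harg : s * ((h - m) / s) + m = h := by field_simp; ring
  rw [harg] at key
  rw [key, stdCdf, ← MeasureTheory.integral_const_mul]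
  apply setIntegral_congr_fun measurableSet_Iio
  intro z _
  have : (s * z + m - m) / s = z := by field_simp; ring
  simp only [smul_eq_mul, this, abs_of_pos hs]

lemma binPdf_eq {ρ : ℝ} (hρ0 : 0 ≤ ρ) (hρ1 : ρ < 1) (x y : ℝ) :
    binPdf x y ρ = stdPdf x * ((1 / Real.sqrt (1 - ρ ^ 2)) *
      stdPdf ((y - ρ * x) / Real.sqrt (1 - ρ ^ 2))) := by
  have h1 : (0:ℝ) < 1 - ρ ^ 2 := by nlinarith
  have hs : (0:ℝ) < Real.sqrt (1 - ρ ^ 2) := Real.sqrt_pos.mpr h1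
  have hsq : Real.sqrt (1 - ρ ^ 2) ^ 2 = 1 - ρ ^ 2 := Real.sq_sqrt h1.le
  have h2π : (0:ℝ) < Real.sqrt (2 * Real.pi) := Real.sqrt_pos.mpr (by positivity)
  have h2πsq : Real.sqrt (2 * Real.pi) ^ 2 = 2 * Real.pi := Real.sq_sqrt (by positivity)
  rw [binPdf, stdPdf, stdPdf]
  have hcoef : (1:ℝ) / (2 * Real.pi * Real.sqrt (1 - ρ ^ 2))
      = 1 / Real.sqrt (2 * Real.pi) * (1 / Real.sqrt (1 - ρ ^ 2) * (1 / Real.sqrt (2 * Real.pi))) := by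
    field_simp
    have h22 : Real.sqrt 2 * Real.sqrt Real.pi * (Real.sqrt 2 * Real.sqrt Real.pi) = 2 * Real.pi := by
      rw [mul_mul_mul_comm, Real.mul_self_sqrt two_pos.le, Real.mul_self_sqrt Real.pi_pos.le]
    nlinarith [h22, Real.sqrt_nonneg (1 - ρ ^ 2)]
  have hexp : -(x ^ 2 - 2 * ρ * x * y + y ^ 2) / (2 * (1 - ρ ^ 2))
      = -x ^ 2 / 2 + -((y - ρ * x) / Real.sqrt (1 - ρ ^ 2)) ^ 2 / 2 := by
    rw [div_pow, hsq]
    field_simp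
    ring
  rw [hcoef, hexp, Real.exp_add]
  ring

lemma inner_integral {ρ : ℝ} (hρ0 : 0 ≤ ρ) (hρ1 : ρ < 1) (x h : ℝ) :
    ∫ y in Iio h, binPdf x y ρ
      = stdPdf x * stdCdf ((h - ρ * x) / Real.sqrt (1 - ρ ^ 2)) := by
  have h1 : (0:ℝ) < 1 - ρ ^ 2 := by nlinarith
  have hs : (0:ℝ) < Real.sqrt (1 - ρ ^ 2) := Real.sqrt_pos.mpr h1
  simp only [binPdf_eq hρ0 hρ1]
  rw [MeasureTheory.integral_const_mul, MeasureTheory.integral_const_mul,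
    sub_lemma _ _ _ hs]
  field_simp

end Aux

theorem lower_bound_ug (ρ u : ℝ) (hρ0 : 0 ≤ ρ) (hρ1 : ρ < 1)
    (hu : u ∈ Set.Ioc (0 : ℝ) (1 / 2)) :
    normCopula u u ρ ≥ u * gFun u ρ := by
  obtain ⟨hu0, hu2⟩ := hu
  have hu1 : u < 1 := lt_of_le_of_lt hu2 (by norm_num)
  set h := stdQuantile u with hh
  have hq : stdCdf h = u := stdCdf_stdQuantile hu0 hu1
  have h1 : (0:ℝ) < 1 - ρ ^ 2 := by nlinarith
  set s := Real.sqrt (1 - ρ ^ 2) with hs_def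
  have hs : (0:ℝ) < s := Real.sqrt_pos.mpr h1
  set c := Real.sqrt ((1 - ρ) / (1 + ρ)) with hc_def
  -- c = (1 - ρ) / s
  have hc : c = (1 - ρ) / s := by
    have hpos : (0:ℝ) < 1 - ρ := by linarith
    have hp1 : (0:ℝ) < 1 + ρ := by linarith
    have e1 : (0:ℝ) < Real.sqrt (1 - ρ) := Real.sqrt_pos.mpr hpos
    have e2 : (0:ℝ) < Real.sqrt (1 + ρ) := Real.sqrt_pos.mpr hp1
    rw [hc_def, hs_def, Real.sqrt_div hpos.le,
      show (1:ℝ) - ρ ^ 2 = (1 - ρ) * (1 + ρ) by ring, Real.sqrt_mul hpos.le]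
    rw [div_eq_div_iff e2.ne' (by positivity)]
    nlinarith [Real.mul_self_sqrt hpos.le, e1.le, e2.le]
  have hInt : Integrable (fun x => stdPdf x * stdCdf ((h - ρ * x) / s)) := by
    have hm : AEStronglyMeasurable (fun x => stdCdf ((h - ρ * x) / s)) volume :=
      (continuous_stdCdf.comp (by fun_prop)).aestronglyMeasurable
    have hb := integrable_stdPdf.bdd_mul hm (c := 1) (Filter.Eventually.of_forall fun x => by
      rw [Real.norm_eq_abs, abs_of_nonneg (stdCdf_nonneg _)]; exact stdCdf_le_one _)
    exact hb.congr (Filter.Eventually.of_forall fun x => mul_comm _ _)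
  have hle : ∫ x in Iio h, stdPdf x * stdCdf (c * h)
      ≤ ∫ x in Iio h, stdPdf x * stdCdf ((h - ρ * x) / s) := by
    apply integral_mono_of_nonneg
    · exact Filter.Eventually.of_forall fun x => mul_nonneg (stdPdf_nonneg x) (stdCdf_nonneg _)
    · exact hInt.integrableOn
    · rw [Filter.EventuallyLE, ae_restrict_iff' measurableSet_Iio]
      refine Filter.Eventually.of_forall fun x hx => ?_
      refine mul_le_mul_of_nonneg_left (stdCdf_mono ?_) (stdPdf_nonneg x)
      rw [hc, div_mul_eq_mul_div, div_le_div_iff_of_pos_right hs]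
      have := mul_le_mul_of_nonneg_left (le_of_lt hx) hρ0
      linarith
  have hLHS : ∫ x in Iio h, stdPdf x * stdCdf (c * h) = u * stdCdf (c * h) := by
    rw [MeasureTheory.integral_mul_const, ← stdCdf, hq]
  have hcongr : normCopula u u ρ = ∫ x in Iio h, stdPdf x * stdCdf ((h - ρ * x) / s) := by
    rw [normCopula, binCdf]
    exact setIntegral_congr_fun measurableSet_Iio fun x _ => inner_integral hρ0 hρ1 x h
  have hg : gFun u ρ = stdCdf (c * h) := rfl
  rw [hcongr, hg, ← hLHS]
  exact hle
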